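/- The function f(α) = Σ_{k=1}^K (α_k/2)·log₂((α_k + P_k)/(α_k + h·P_k)), over probability vectors α with positive entries, satisfies f(α) ≤ (1/2)·log₂((1 + Σ_k P_k)/(1 + h·Σ_k P_k)), with equality when α_k = P_k/Σ_j P_j. -/

import Mathlib

open Real Finset

lemma concF (h : ℝ) (hh0 : 0 < h) (hh1 : h < 1) :
    ConcaveOn ℝ (Set.Ici (0:ℝ)) (fun t => Real.log (1 + t) - Real.log (1 + h * t)) := by
  have hint : interior (Set.Ici (0:ℝ)) = Set.Ioi 0 := interior_Ici
  apply concaveOn_of_hasDerivWithinAt2_nonpos (convex_Ici 0)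
    (f' := fun t => (1 + t)⁻¹ - h * (1 + h * t)⁻¹)
    (f'' := fun t => -((1 + t)⁻¹)^2 + h^2 * ((1 + h * t)⁻¹)^2)
  · apply ContinuousOn.sub
    · apply ContinuousOn.log (by fun_prop)
      intro x hx
      have : (0:ℝ) ≤ x := hx
      positivity
    · apply ContinuousOn.log (by fun_prop)
      intro x hx
      have : (0:ℝ) ≤ x := hx
      positivity
  · rw [hint]
    intro x hx
    have hx0 : (0:ℝ) < x := hx
    have h1 : (0:ℝ) < 1 + x := by linarith
    have h2 : (0:ℝ) < 1 + h * x := by positivity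
    have d1 : HasDerivAt (fun t : ℝ => Real.log (1 + t)) ((1 + x)⁻¹) x := by
      have : HasDerivAt (fun t : ℝ => 1 + t) 1 x := (hasDerivAt_id x).const_add 1
      simpa [one_div] using this.log h1.ne'
    have d2 : HasDerivAt (fun t : ℝ => Real.log (1 + h * t)) (h * (1 + h * x)⁻¹) x := by
      have : HasDerivAt (fun t : ℝ => 1 + h * t) h x := by
        simpa using ((hasDerivAt_id x).const_mul h).const_add 1
      simpa [div_eq_mul_inv] using this.log h2.ne'
    exact (d1.sub d2).hasDerivWithinAt
  · rw [hint]
    intro x hx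
    have hx0 : (0:ℝ) < x := hx
    have h1 : (0:ℝ) < 1 + x := by linarith
    have h2 : (0:ℝ) < 1 + h * x := by positivity
    have d1 : HasDerivAt (fun t : ℝ => (1 + t)⁻¹) (-((1 + x)⁻¹)^2) x := by
      have : HasDerivAt (fun t : ℝ => 1 + t) 1 x := (hasDerivAt_id x).const_add 1
      have := this.inv h1.ne'
      convert this using 1
      · rfl
      · rfl
      · rfl
      · rw [inv_pow, div_eq_mul_inv]
        ring
    have d2 : HasDerivAt (fun t : ℝ => h * (1 + h * t)⁻¹) (-(h^2 * ((1 + h * x)⁻¹)^2)) x := by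
      have hb : HasDerivAt (fun t : ℝ => 1 + h * t) h x := by
        simpa using ((hasDerivAt_id x).const_mul h).const_add 1
      have := (hb.inv h2.ne').const_mul h
      convert this using 1
      · rfl
      · rfl
      · rfl
      · rw [inv_pow, div_eq_mul_inv]
        ring
    have := d1.sub d2
    have e : -((1 + x)⁻¹)^2 - -(h^2 * ((1 + h * x)⁻¹)^2)
        = -((1 + x)⁻¹)^2 + h^2 * ((1 + h * x)⁻¹)^2 := by ring
    rw [e] at this
    exact this.hasDerivWithinAt
  · rw [hint]
    intro x hx
    have hx0 : (0:ℝ) < x := hx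
    have h1 : (0:ℝ) < 1 + x := by linarith
    have h2 : (0:ℝ) < 1 + h * x := by positivity
    have key : h / (1 + h * x) ≤ 1 / (1 + x) := by
      rw [div_le_div_iff₀ h2 h1]
      nlinarith
    have key2 : (h / (1 + h * x))^2 ≤ (1 / (1 + x))^2 :=
      pow_le_pow_left₀ (by positivity) key 2
    have : h^2 * ((1 + h * x)⁻¹)^2 ≤ ((1 + x)⁻¹)^2 := by
      rw [div_eq_mul_inv, mul_pow, div_eq_mul_inv, mul_pow, one_pow, one_mul] at key2
      exact key2
    linarith

/-- For probability vectors `α` with positive entries and `0 < h < 1`,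
`f(α) = Σ_k (α_k/2)·log₂((α_k + P_k)/(α_k + h·P_k)) ≤ (1/2)·log₂((1+Σ_k P_k)/(1+h·Σ_k P_k))`,
with equality when `α_k = P_k/Σ_j P_j`. -/
theorem tdma_secrecy_jensen_bound
    (K : ℕ) (hK : 0 < K) (P : Fin K → ℝ) (hP : ∀ k, 0 < P k)
    (h : ℝ) (hh0 : 0 < h) (hh1 : h < 1) :
    (∀ α : Fin K → ℝ, (∀ k, 0 < α k) → (∑ k, α k) = 1 →
      ∑ k, (α k / 2) * logb 2 ((α k + P k) / (α k + h * P k))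
        ≤ (1 / 2) * logb 2 ((1 + ∑ k, P k) / (1 + h * ∑ k, P k))) ∧
    (∑ k, ((P k / ∑ j, P j) / 2) *
        logb 2 (((P k / ∑ j, P j) + P k) / ((P k / ∑ j, P j) + h * P k))
      = (1 / 2) * logb 2 ((1 + ∑ k, P k) / (1 + h * ∑ k, P k))) := by
  have hne : (univ : Finset (Fin K)).Nonempty := univ_nonempty_iff.2 (Fin.pos_iff_nonempty.1 hK)
  have hS : (0:ℝ) < ∑ k, P k := Finset.sum_pos (fun k _ => hP k) hne
  set S : ℝ := ∑ k, P k with hSdef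
  have hlog2 : (0:ℝ) < Real.log 2 := Real.log_pos (by norm_num)
  have h1S : (0:ℝ) < 1 + S := by linarith
  have h2S : (0:ℝ) < 1 + h * S := by positivity
  have hlogb : ∀ x y : ℝ, 0 < x → 0 < y →
      logb 2 (x / y) = (Real.log x - Real.log y) / Real.log 2 := by
    intro x y hx hy
    rw [Real.logb, Real.log_div hx.ne' hy.ne']
  constructor
  · intro α hα hsum
    have hmem : ∀ k ∈ univ, P k / α k ∈ Set.Ici (0:ℝ) := by
      intro k _
      have := hP k; have := hα k
      exact Set.mem_Ici.2 (by positivity)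
    have jen := (concF h hh0 hh1).le_map_sum (fun k _ => (hα k).le) hsum hmem
    have hsum2 : ∑ k, α k • (P k / α k) = S := by
      rw [hSdef]
      apply Finset.sum_congr rfl
      intro k _
      have := (hα k).ne'
      rw [smul_eq_mul]
      field_simp
    rw [hsum2] at jen
    have hFk : ∀ k, Real.log (1 + P k / α k) - Real.log (1 + h * (P k / α k))
        = Real.log (α k + P k) - Real.log (α k + h * P k) := by
      intro k
      have ha := hα k
      have hp := hP k
      have e1 : 1 + P k / α k = (α k + P k) / α k := by field_simp
      have e2 : 1 + h * (P k / α k) = (α k + h * P k) / α k := by field_simp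
      rw [e1, e2, Real.log_div (by positivity) ha.ne', Real.log_div (by positivity) ha.ne']
      ring
    calc ∑ k, (α k / 2) * logb 2 ((α k + P k) / (α k + h * P k))
        = (1 / (2 * Real.log 2)) *
            ∑ k, α k • (Real.log (1 + P k / α k) - Real.log (1 + h * (P k / α k))) := by
          rw [Finset.mul_sum]
          apply Finset.sum_congr rfl
          intro k _
          have ha := hα k
          have hp := hP k
          rw [smul_eq_mul, hFk k, hlogb _ _ (by positivity) (by positivity)]
          field_simp
      _ ≤ (1 / (2 * Real.log 2)) * (Real.log (1 + S) - Real.log (1 + h * S)) := by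
          apply mul_le_mul_of_nonneg_left jen (by positivity)
      _ = (1 / 2) * logb 2 ((1 + S) / (1 + h * S)) := by
          rw [hlogb _ _ h1S h2S]
          field_simp
  · have hratio : ∀ k, ((P k / S) + P k) / ((P k / S) + h * P k) = (1 + S) / (1 + h * S) := by
      intro k
      have hp := (hP k).ne'
      rw [div_eq_div_iff (by have := hP k; positivity) (by positivity)]
      field_simp
    calc ∑ k, ((P k / S) / 2) * logb 2 (((P k / S) + P k) / ((P k / S) + h * P k))
        = ∑ k, ((P k / S) / 2) * logb 2 ((1 + S) / (1 + h * S)) := by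
          apply Finset.sum_congr rfl
          intro k _
          rw [hratio k]
      _ = (∑ k, (P k / S) / 2) * logb 2 ((1 + S) / (1 + h * S)) := by
          rw [Finset.sum_mul]
      _ = (1 / 2) * logb 2 ((1 + S) / (1 + h * S)) := by
          congr 1
          rw [← Finset.sum_div, ← Finset.sum_div, ← hSdef]
          field_simp
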